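/- Let G be a group object in the category of groupoids (a strict 2-group). Let G₁ be the group of objects and G₂ the set of arrows with source the identity object e. Then G₂ is a subgroup of the group of all arrows, the map φ : G₂ → G₁ sending an arrow to its target is a group homomorphism, and together with the conjugation action of G₁ on G₂ (α ↦ g⁻¹αg, viewing g as an identity arrow), the data [φ : G₂ → G₁] forms a crossed module. -/

import Mathlib

/-- A strict 2-group: a groupoid internal to the category of groups. Both the
objects `Ob` and the arrows `Ar` form groups, and the source, target,
identity-assigning and composition maps are group homomorphisms (composition
being a homomorphism is the interchange law `comp_hom`). -/
structure Strict2Group (Ob Ar : Type*) [Group Ob] [Group Ar] where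
  s : Ar →* Ob
  t : Ar →* Ob
  e : Ob →* Ar
  s_e : ∀ g : Ob, s (e g) = g
  t_e : ∀ g : Ob, t (e g) = g
  /-- composition of arrows (only meaningful on composable pairs) -/
  comp : Ar → Ar → Ar
  s_comp : ∀ f g : Ar, t f = s g → s (comp f g) = s f
  t_comp : ∀ f g : Ar, t f = s g → t (comp f g) = t g
  id_comp : ∀ f : Ar, comp (e (s f)) f = f
  comp_id : ∀ f : Ar, comp f (e (t f)) = f
  comp_assoc : ∀ f g h : Ar, t f = s g → t g = s h →
    comp (comp f g) h = comp f (comp g h)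
  /-- every arrow is invertible -/
  inv' : Ar → Ar
  s_inv : ∀ f : Ar, s (inv' f) = t f
  t_inv : ∀ f : Ar, t (inv' f) = s f
  comp_inv : ∀ f : Ar, comp f (inv' f) = e (s f)
  inv_comp : ∀ f : Ar, comp (inv' f) f = e (t f)
  /-- interchange: composition is a group homomorphism -/
  comp_hom : ∀ f g f' g' : Ar, t f = s g → t f' = s g' →
    comp (f * f') (g * g') = comp f g * comp f' g'

/-- for a strict 2-group `G`, let `G₁ = Ob` (the group of objects)
and `G₂ = ker s` (the arrows with source the identity object `1`). Then `G₂` is a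
subgroup of the group of arrows, the target map `φ = t` restricts to a group
homomorphism `G₂ → G₁`, and together with the conjugation action
`α^g = (e g)⁻¹ α (e g)` the data `[φ : G₂ → G₁]` forms a crossed module. -/

private lemma s2g_key {Ob Ar : Type*} [Group Ob] [Group Ar]
    (G : Strict2Group Ob Ar) (α β : Ar) (hα : G.s α = 1) (hβ : G.s β = 1) :
    α * (G.e (G.t α))⁻¹ * β * G.e (G.t α) = β * α := by
  set a := G.t α with ha
  have h1 : G.comp α (β * G.e a) = α * (G.e a)⁻¹ * β * G.e a := by
    have expand : α = (α * (G.e a)⁻¹) * G.e a := by group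
    have gexpand : β * G.e a = (1 : Ar) * (β * G.e a) := by group
    calc G.comp α (β * G.e a)
        = G.comp ((α * (G.e a)⁻¹) * G.e a) ((1 : Ar) * (β * G.e a)) := by
          rw [← expand, ← gexpand]
      _ = G.comp (α * (G.e a)⁻¹) 1 * G.comp (G.e a) (β * G.e a) := by
          apply G.comp_hom
          · simp [map_mul, map_inv, hα, G.t_e, G.s_e, a]
          · simp [map_mul, G.t_e, G.s_e, hβ]
      _ = (α * (G.e a)⁻¹) * (β * G.e a) := by
          have h2 : G.comp (α * (G.e a)⁻¹) 1 = α * (G.e a)⁻¹ := by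
            have : (1 : Ar) = G.e (G.t (α * (G.e a)⁻¹)) := by
              simp [map_mul, map_inv, hα, G.t_e, a]
            rw [this]; exact G.comp_id _
          have h3 : G.comp (G.e a) (β * G.e a) = β * G.e a := by
            have : G.e a = G.e (G.s (β * G.e a)) := by
              simp [map_mul, G.s_e, hβ]
            nth_rewrite 1 [this]; exact G.id_comp _
          rw [h2, h3]
      _ = α * (G.e a)⁻¹ * β * G.e a := by group
  have h4 : G.comp α (β * G.e a) = β * α := by
    calc G.comp α (β * G.e a) = G.comp ((1 : Ar) * α) (β * G.e a) := by rw [one_mul]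
      _ = G.comp 1 β * G.comp α (G.e a) := by
          apply G.comp_hom
          · simp [hβ]
          · simp [G.s_e, a]
      _ = β * α := by
          have h5 : G.comp (1 : Ar) β = β := by
            have : (1 : Ar) = G.e (G.s β) := by simp [hβ]
            rw [this]; exact G.id_comp β
          have h6 : G.comp α (G.e a) = α := G.comp_id α
          rw [h5, h6]
  rw [← h1, h4]

theorem strict2Group_toCrossedModule {Ob Ar : Type*} [Group Ob] [Group Ar]
    (G : Strict2Group Ob Ar) :
    -- G₂ = ker s is a subgroup (closure under multiplication, identity, inverses)
    ((1 : Ar) ∈ G.s.ker ∧ (∀ α β : Ar, α ∈ G.s.ker → β ∈ G.s.ker → α * β ∈ G.s.ker) ∧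
      (∀ α : Ar, α ∈ G.s.ker → α⁻¹ ∈ G.s.ker)) ∧
    -- φ = t restricted to ker s is a group homomorphism (restriction of the hom t)
    (∀ α β : Ar, G.t (α * β) = G.t α * G.t β) ∧
    -- the conjugation action preserves G₂ = ker s
    (∀ (β : Ar) (g : Ob), β ∈ G.s.ker → (G.e g)⁻¹ * β * G.e g ∈ G.s.ker) ∧
    -- it is a right action by group automorphisms
    (∀ β : Ar, (G.e (1 : Ob))⁻¹ * β * G.e (1 : Ob) = β) ∧
    (∀ (β : Ar) (g h : Ob),
      (G.e (g * h))⁻¹ * β * G.e (g * h) = (G.e h)⁻¹ * ((G.e g)⁻¹ * β * G.e g) * G.e h) ∧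
    (∀ (α β : Ar) (g : Ob),
      (G.e g)⁻¹ * (α * β) * G.e g = ((G.e g)⁻¹ * α * G.e g) * ((G.e g)⁻¹ * β * G.e g)) ∧
    -- CM1: β^{φ α} = α⁻¹ β α for α, β ∈ G₂
    (∀ α β : Ar, α ∈ G.s.ker → β ∈ G.s.ker →
      (G.e (G.t α))⁻¹ * β * G.e (G.t α) = α⁻¹ * β * α) ∧
    -- CM2: φ(β^g) = g⁻¹ (φ β) g
    (∀ (β : Ar) (g : Ob), β ∈ G.s.ker →
      G.t ((G.e g)⁻¹ * β * G.e g) = g⁻¹ * G.t β * g) := by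
  refine ⟨⟨?_, ?_, ?_⟩, ?_, ?_, ?_, ?_, ?_, ?_, ?_⟩
  · simp [MonoidHom.mem_ker]
  · intro α β hα hβ
    simp [MonoidHom.mem_ker] at *
    simp [hα, hβ]
  · intro α hα
    simp [MonoidHom.mem_ker] at *
    simp [hα]
  · intro α β; exact map_mul _ _ _
  · intro β g hβ
    simp [MonoidHom.mem_ker] at *
    simp [G.s_e, hβ]
  · intro β; simp
  · intro β g h; simp [map_mul]; group
  · intro α β g; group
  · intro α β hα hβ
    have := s2g_key G α β hα hβ
    have h := congrArg (fun x => α⁻¹ * x) this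
    beta_reduce at h
    calc (G.e (G.t α))⁻¹ * β * G.e (G.t α)
        = α⁻¹ * (α * (G.e (G.t α))⁻¹ * β * G.e (G.t α)) := by group
      _ = α⁻¹ * (β * α) := by rw [this]
      _ = α⁻¹ * β * α := by group
  · intro β g hβ
    simp [map_mul, map_inv, G.t_e]
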